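/- Let α be an irrational multiple of π and let U_a be the 2×2 rotation matrix by angle α, U_b = U_a⁻¹. For a word x over {a,b}, the product of the corresponding matrices applied to the unit vector e₀ equals e₀ if and only if the number of a's in x equals the number of b's. Consequently, the 2-state measure-once quantum automaton with transition matrices U_a, U_b, initial state e₀ and accepting state e₁ accepts the non-regular language {x ∈ {a,b}* : |x|_a ≠ |x|_b} with cut-point 0. -/

import Mathlib

/-- Rotation matrix by angle `α`. -/
noncomputable def rotMat (α : ℝ) : Matrix (Fin 2) (Fin 2) ℝ :=
  !![Real.cos α, Real.sin α; -Real.sin α, Real.cos α]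

/-- Transition matrix of the 2-state MO-QFA: letter `a` (encoded `true`) rotates by `α`,
letter `b` (encoded `false`) by `-α` (the inverse rotation). -/
noncomputable def rotStep (α : ℝ) (b : Bool) : Matrix (Fin 2) (Fin 2) ℝ :=
  if b then rotMat α else (rotMat α)⁻¹

lemma rotMat_inv (α : ℝ) : (rotMat α)⁻¹ = rotMat (-α) := by
  apply Matrix.inv_eq_right_inv
  simp [rotMat, Matrix.mul_fin_two, Matrix.one_fin_two]
  refine ⟨⟨?_, ?_⟩, ?_, ?_⟩ <;> nlinarith [Real.sin_sq_add_cos_sq α]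

lemma rotMat_mulVec (β x : ℝ) :
    (rotMat β).mulVec ![Real.cos x, -Real.sin x] = ![Real.cos (x + β), -Real.sin (x + β)] := by
  funext i
  fin_cases i <;>
    simp [rotMat, Matrix.mulVec, dotProduct, Fin.sum_univ_two, Real.cos_add, Real.sin_add] <;>
    ring

lemma rotFold (α : ℝ) : ∀ (x : List Bool) (θ : ℝ),
    x.foldl (fun v b => (rotStep α b).mulVec v) ![Real.cos θ, -Real.sin θ] =
      ![Real.cos (θ + ((x.count true : ℤ) - x.count false) * α),
        -Real.sin (θ + ((x.count true : ℤ) - x.count false) * α)]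
  | [], θ => by simp
  | b :: x, θ => by
    have hstep : (rotStep α b).mulVec ![Real.cos θ, -Real.sin θ] =
        ![Real.cos (θ + if b then α else -α), -Real.sin (θ + if b then α else -α)] := by
      cases b <;> simp only [rotStep, rotMat_inv, if_true, if_false, Bool.false_eq_true, rotMat_mulVec]
    rw [List.foldl_cons, hstep, rotFold α x]
    cases b <;> · congr 2 <;> · push_cast [List.count_cons]; simp; ring


/-- The configuration after reading word `x`, starting from `e₀ = (1,0)ᵀ`:
`U(x) e₀ = U_{xₙ} ⋯ U_{x₁} e₀`. -/
noncomputable def rotRun (α : ℝ) (x : List Bool) : Fin 2 → ℝ :=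
  x.foldl (fun v b => (rotStep α b).mulVec v) ![1, 0]

lemma rotRun_eq (α : ℝ) (x : List Bool) :
    rotRun α x = ![Real.cos (((x.count true : ℤ) - x.count false) * α),
        -Real.sin (((x.count true : ℤ) - x.count false) * α)] := by
  have := rotFold α x 0
  simpa [rotRun] using this


/-- with `α` an irrational multiple of `π`, `U(x) e₀ = e₀` iff the numbers of
`a`s and `b`s in `x` are equal; consequently the MO-QFA with accepting state `e₁` accepts
the non-regular language `{x : |x|_a ≠ |x|_b}` with cut-point 0 (positive acceptance
probability `|⟨e₁, U(x)e₀⟩|²` exactly on words of the language). -/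
theorem moqfa_accepts_unequal_counts_cutpoint_zero (α r : ℝ)
    (hr : Irrational r) (hα : α = r * Real.pi) :
    ∀ x : List Bool,
      (rotRun α x = ![1, 0] ↔ x.count true = x.count false) ∧
      (0 < (rotRun α x 1) ^ 2 ↔ x.count true ≠ x.count false) := by
  intro x
  set n : ℤ := (x.count true : ℤ) - x.count false with hn
  have h : rotRun α x = ![Real.cos ((n : ℝ) * α), -Real.sin ((n : ℝ) * α)] := by
    rw [rotRun_eq α x]
    norm_num [hn]
  have h1 : rotRun α x 1 = -Real.sin ((n : ℝ) * α) := by rw [h]; simp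
  have hcount : n = 0 ↔ x.count true = x.count false := by
    rw [hn, sub_eq_zero]; exact_mod_cast Int.natCast_inj
  have hsin : Real.sin ((n : ℝ) * α) = 0 ↔ n = 0 := by
    constructor
    · intro hs
      rw [Real.sin_eq_zero_iff] at hs
      obtain ⟨k, hk⟩ := hs
      rw [hα] at hk
      have hπ : Real.pi ≠ 0 := Real.pi_ne_zero
      have hkr : (k : ℝ) = (n : ℝ) * r := by
        have := mul_right_cancel₀ hπ (by linarith [hk] : (k : ℝ) * Real.pi = ((n : ℝ) * r) * Real.pi)
        exact this
      by_contra hne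
      have hn0 : ((n : ℤ) : ℝ) ≠ 0 := Int.cast_ne_zero.mpr hne
      apply hr
      refine ⟨(k : ℚ) / (n : ℚ), ?_⟩
      push_cast
      field_simp
      linarith [hkr]
    · intro h0; rw [h0]; simp
  refine ⟨⟨fun he => ?_, fun hc => ?_⟩, ?_⟩
  · have : rotRun α x 1 = 0 := by rw [he]; simp
    rw [h1, neg_eq_zero] at this
    exact hcount.mp (hsin.mp this)
  · have h0 : n = 0 := hcount.mpr hc
    rw [h, h0]
    norm_num
  · rw [h1, show (-Real.sin ((n:ℝ)*α))^2 = (Real.sin ((n:ℝ)*α))^2 by ring]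
    constructor
    · intro hp hc
      rw [hsin.mpr (hcount.mpr hc)] at hp
      simp at hp
    · intro hc
      have : Real.sin ((n:ℝ)*α) ≠ 0 := fun h0 => hc (hcount.mp (hsin.mp h0))
      positivity
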